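/- Let n be a natural number, a b : Fin n → ℝ both monotone increasing. Then for every permutation σ of Fin n, ∑ i, |a(i) - b(i)| ≤ ∑ i, |a(σ(i)) - b(i)|. -/

import Mathlib

open Finset

private lemma cross_abs {x x' y y' : ℝ} (hx : x ≤ x') (hy : y ≤ y') :
    |x - y| + |x' - y'| ≤ |x - y'| + |x' - y| := by
  rcases abs_cases (x - y) with ⟨e1, _⟩ | ⟨e1, _⟩ <;>
  rcases abs_cases (x' - y') with ⟨e2, _⟩ | ⟨e2, _⟩ <;>
  rcases abs_cases (x - y') with ⟨e3, _⟩ | ⟨e3, _⟩ <;>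
  rcases abs_cases (x' - y) with ⟨e4, _⟩ | ⟨e4, _⟩ <;>
  linarith

private lemma sorted_matching_aux : ∀ (n : ℕ) (a b : Fin n → ℝ),
    Monotone a → Monotone b → ∀ σ : Equiv.Perm (Fin n),
    ∑ i, |a i - b i| ≤ ∑ i, |a (σ i) - b i| := by
  intro n
  induction n with
  | zero => intro a b _ _ σ; simp
  | succ n ih =>
    intro a b ha hb σ
    set j : Fin (n + 1) := σ⁻¹ 0 with hj
    set s : Equiv.Perm (Fin (n + 1)) := Equiv.swap j 0 with hs
    set σ' : Equiv.Perm (Fin (n + 1)) := σ * s with hσ'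
    have hσ'app : ∀ i, σ' i = σ (s i) := fun i => rfl
    have hσ'0 : σ' 0 = 0 := by
      rw [hσ'app]
      have : s 0 = j := Equiv.swap_apply_right j 0
      rw [this, hj]
      exact σ.apply_symm_apply 0
    -- Step 1 : ∑ |a (σ' i) - b i| ≤ ∑ |a (σ i) - b i|
    have step1 : ∑ i, |a (σ' i) - b i| ≤ ∑ i, |a (σ i) - b i| := by
      have reidx : ∑ i, |a (σ i) - b i| = ∑ i, |a (σ (s i)) - b (s i)| :=
        (Equiv.sum_comp s (fun i => |a (σ i) - b i|)).symm
      rw [reidx]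
      simp only [hσ'app]
      by_cases hj0 : j = 0
      · apply le_of_eq
        refine Finset.sum_congr rfl fun i _ => ?_
        rw [hs, hj0, Equiv.swap_self, Equiv.refl_apply]
      · have h0mem : (0 : Fin (n + 1)) ∈ Finset.univ.erase j :=
          Finset.mem_erase.2 ⟨fun h => hj0 h.symm, Finset.mem_univ _⟩
        have split : ∀ f : Fin (n + 1) → ℝ,
            ∑ i, f i = f j + (f 0 + ∑ i ∈ (Finset.univ.erase j).erase 0, f i) := by
          intro f
          rw [← Finset.add_sum_erase _ f (Finset.mem_univ j),
              ← Finset.add_sum_erase _ f h0mem]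
        rw [split (fun i => |a (σ (s i)) - b i|), split (fun i => |a (σ (s i)) - b (s i)|)]
        have hrest : ∑ i ∈ (Finset.univ.erase j).erase 0, |a (σ (s i)) - b i|
            = ∑ i ∈ (Finset.univ.erase j).erase 0, |a (σ (s i)) - b (s i)| := by
          refine Finset.sum_congr rfl fun i hi => ?_
          have hi0 : i ≠ 0 := (Finset.mem_erase.1 hi).1
          have hij : i ≠ j := (Finset.mem_erase.1 (Finset.mem_erase.1 hi).2).1
          rw [Equiv.swap_apply_of_ne_of_ne hij hi0]
        have hsj : s j = 0 := Equiv.swap_apply_left j 0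
        have hs0 : s 0 = j := Equiv.swap_apply_right j 0
        have hσj : σ j = 0 := σ.apply_symm_apply 0
        simp only [hsj, hs0, hσj]
        have hx : a 0 ≤ a (σ 0) := ha (Fin.zero_le _)
        have hy : b 0 ≤ b j := hb (Fin.zero_le _)
        have := cross_abs hx hy
        linarith [hrest.le, hrest.ge, this]
    -- Step 2 : restrict σ' to Fin n
    have hne0 : ∀ k : Fin n, σ' k.succ ≠ 0 := by
      intro k h
      have := σ'.injective (h.trans hσ'0.symm)
      exact (Fin.succ_ne_zero k) this
    set f : Fin n → Fin n := fun k => (σ' k.succ).pred (hne0 k) with hf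
    have hfsucc : ∀ k, (f k).succ = σ' k.succ := fun k => Fin.succ_pred _ _
    have finj : Function.Injective f := by
      intro k l h
      have h2 : σ' k.succ = σ' l.succ := by
        rw [← hfsucc k, ← hfsucc l, h]
      exact Fin.succ_injective n (σ'.injective h2)
    set τ : Equiv.Perm (Fin n) := Equiv.ofBijective f (Finite.injective_iff_bijective.mp finj)
      with hτ
    have hτapp : ∀ k, τ k = f k := fun k => rfl
    have key := ih (a ∘ Fin.succ) (b ∘ Fin.succ)
      (ha.comp (Fin.strictMono_succ).monotone) (hb.comp (Fin.strictMono_succ).monotone) τ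
    simp only [Function.comp] at key
    have key' : ∑ k : Fin n, |a k.succ - b k.succ| ≤ ∑ k : Fin n, |a (σ' k.succ) - b k.succ| := by
      refine key.trans (le_of_eq ?_)
      refine Finset.sum_congr rfl fun k _ => ?_
      rw [hτapp, hfsucc]
    calc ∑ i, |a i - b i|
        = |a 0 - b 0| + ∑ k : Fin n, |a k.succ - b k.succ| := by
          rw [Fin.sum_univ_succ]
      _ ≤ |a (σ' 0) - b 0| + ∑ k : Fin n, |a (σ' k.succ) - b k.succ| := by
          rw [hσ'0]; exact add_le_add le_rfl key'
      _ = ∑ i, |a (σ' i) - b i| := (Fin.sum_univ_succ (fun i => |a (σ' i) - b i|)).symm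
      _ ≤ ∑ i, |a (σ i) - b i| := step1

theorem sorted_matching_mae {n : ℕ} (a b : Fin n → ℝ)
    (ha : Monotone a) (hb : Monotone b) (σ : Equiv.Perm (Fin n)) :
    ∑ i, |a i - b i| ≤ ∑ i, |a (σ i) - b i| :=
  sorted_matching_aux n a b ha hb σ
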